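/- Let G be an n-vertex d-regular graph with adjacency matrix A and smallest eigenvalue λ_min. Then for every vertex subset U ⊆ V(G), the number of edges inside U satisfies e(U) ≥ (|U|/(2n))·(|U|·d + λ_min·(n − |U|)). -/

import Mathlib

open Finset
open scoped Classical

abbrev V (n : ℕ) : Type := Fin n → ZMod 2

def dotp {n : ℕ} (α x : V n) : ZMod 2 := ∑ i, α i * x i

def IsBool {n : ℕ} (f : V n → ℝ) : Prop := ∀ x, f x = 0 ∨ f x = 1

/-- `f` is odd-cycle-free: no odd `k` and `x_1,…,x_k` in the support summing to `0`. -/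
def OCF {n : ℕ} (f : V n → ℝ) : Prop :=
  ∀ k : ℕ, Odd k → ¬ ∃ x : Fin k → V n, (∀ i, f (x i) = 1) ∧ (∑ i, x i) = 0

noncomputable def fhat {n : ℕ} (f : V n → ℝ) (α : V n) : ℝ :=
  (∑ x : V n, f x * (-1 : ℝ) ^ (dotp α x).val) / 2 ^ n

/-- `f` is `ε`-far from odd-cycle-free: every Boolean OCF function differs from `f`
on at least `ε·2^n` points. -/
def FarFromOCF {n : ℕ} (ε : ℝ) (f : V n → ℝ) : Prop :=
  ∀ g : V n → ℝ, IsBool g → OCF g →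
    ε * 2 ^ n ≤ ((Finset.univ.filter fun x => f x ≠ g x).card : ℝ)

open Matrix

theorem stmt8 {Vt : Type*} [Fintype Vt] [DecidableEq Vt] (G : SimpleGraph Vt)
    [DecidableRel G.Adj] (d : ℕ) (hreg : G.IsRegularOfDegree d) (lmin : ℝ)
    (hmin : Module.End.HasEigenvalue (Matrix.toLin' (G.adjMatrix ℝ)) lmin)
    (hle : ∀ μ : ℝ, Module.End.HasEigenvalue (Matrix.toLin' (G.adjMatrix ℝ)) μ → lmin ≤ μ)
    (U : Finset Vt) :
    (U.card : ℝ) / (2 * Fintype.card Vt) *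
        (U.card * d + lmin * (Fintype.card Vt - U.card)) ≤
      (∑ u ∈ U, ∑ v ∈ U, G.adjMatrix ℝ u v) / 2 := by
  classical
  set A := G.adjMatrix ℝ with hA
  set n := Fintype.card Vt with hn
  rcases Nat.eq_zero_or_pos n with h0 | hpos
  · have : U = ∅ := Finset.eq_empty_of_forall_notMem fun x _ =>
      (Fintype.card_eq_zero_iff.mp h0).false x
    simp [this, h0]
  -- A is symmetric
  have hsymm : A.IsHermitian := by
    ext i j
    simp [hA, Matrix.conjTranspose_apply, SimpleGraph.adjMatrix_apply, G.adj_comm]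
  -- M = A - lmin • 1 is PSD
  set M : Matrix Vt Vt ℝ := A - lmin • (1 : Matrix Vt Vt ℝ) with hM
  have hMh : M.IsHermitian := by
    refine hsymm.sub ?_
    ext i j
    simp [Matrix.conjTranspose_apply, Matrix.one_apply]
    split <;> simp_all [eq_comm]
  have hMps : M.PosSemidef := by
    refine hMh.posSemidef_iff_eigenvalues_nonneg.mpr fun i => ?_
    set μ := hMh.eigenvalues i with hμ
    have hw := hMh.mulVec_eigenvectorBasis i
    set w : Vt → ℝ := ⇑(hMh.eigenvectorBasis i) with hwdef
    have hwne : w ≠ 0 := by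
      have := hMh.eigenvectorBasis.toBasis.ne_zero i
      simpa [hwdef] using fun h => this (by ext x; simp [h])
    have hev : Module.End.HasEigenvalue (Matrix.toLin' A) (μ + lmin) := by
      apply Module.End.hasEigenvalue_of_hasEigenvector (x := w)
      constructor
      · rw [Module.End.mem_eigenspace_iff, Matrix.toLin'_apply]
        have hAw : A *ᵥ w = μ • w + lmin • w := by
          have : M *ᵥ w = A *ᵥ w - lmin • w := by
            simp [hM, Matrix.sub_mulVec, Matrix.smul_mulVec, Matrix.one_mulVec]
          rw [this] at hw
          rw [sub_eq_iff_eq_add.mp hw]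
        rw [hAw, add_smul]
      · exact hwne
    linarith [hle _ hev, show (0 : Vt → ℝ) i = 0 from rfl]
  -- apply PSD to test vector
  set c : ℝ := (U.card : ℝ) / n with hc
  set x : Vt → ℝ := fun v => (if v ∈ U then (1 : ℝ) else 0) - c with hx
  have key := hMps.dotProduct_mulVec_nonneg x
  have hstar : star x = x := by ext v; simp
  rw [hstar] at key
  -- expand dot product
  have hrow : ∀ u : Vt, ∑ v, A u v = (d : ℝ) := by
    intro u
    simp only [hA, SimpleGraph.adjMatrix_apply, Finset.sum_boole]
    rw [← SimpleGraph.neighborFinset_eq_filter]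
    exact_mod_cast congrArg Nat.cast (hreg u)
  have hcol : ∀ v : Vt, ∑ u, A u v = (d : ℝ) := by
    intro v
    have : ∀ u, A u v = A v u := fun u => by
      simp [hA, SimpleGraph.adjMatrix_apply, G.adj_comm]
    simp_rw [this]
    exact hrow v
  set S : ℝ := ∑ u ∈ U, ∑ v ∈ U, A u v with hS
  have h1 : ∑ u, ∑ v, A u v * (if u ∈ U then (1:ℝ) else 0) * (if v ∈ U then (1:ℝ) else 0) = S := by
    rw [hS]
    rw [← Finset.sum_subset U.subset_univ (by
      intro u _ hu
      simp [hu])]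
    refine Finset.sum_congr rfl fun u hu => ?_
    rw [← Finset.sum_subset U.subset_univ (by
      intro v _ hv
      simp [hv])]
    refine Finset.sum_congr rfl fun v hv => by simp [hu, hv]
  have h2 : ∑ u, ∑ v, A u v * (if u ∈ U then (1:ℝ) else 0) = (d : ℝ) * U.card := by
    have : ∀ u : Vt, ∑ v, A u v * (if u ∈ U then (1:ℝ) else 0)
        = (if u ∈ U then (d:ℝ) else 0) := by
      intro u
      rw [← Finset.sum_mul, hrow]
      split <;> simp
    simp_rw [this, Finset.sum_ite_mem, Finset.univ_inter, Finset.sum_const]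
    ring
  have h3 : ∑ u, ∑ v, A u v * (if v ∈ U then (1:ℝ) else 0) = (d : ℝ) * U.card := by
    rw [Finset.sum_comm]
    have : ∀ v : Vt, ∑ u, A u v * (if v ∈ U then (1:ℝ) else 0)
        = (if v ∈ U then (d:ℝ) else 0) := by
      intro v
      rw [← Finset.sum_mul, hcol]
      split <;> simp
    simp_rw [this, Finset.sum_ite_mem, Finset.univ_inter, Finset.sum_const]
    ring
  have h4 : ∑ u : Vt, ∑ v : Vt, A u v = (d : ℝ) * n := by
    simp_rw [hrow, Finset.sum_const, hn, Finset.card_univ]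
    ring
  have hAx : x ⬝ᵥ (A *ᵥ x) = S - c * ((d:ℝ) * U.card) - c * ((d:ℝ) * U.card) + c * c * ((d:ℝ) * n) := by
    have expand : x ⬝ᵥ (A *ᵥ x) = ∑ u, ∑ v,
        (A u v * (if u ∈ U then (1:ℝ) else 0) * (if v ∈ U then (1:ℝ) else 0)
          - c * (A u v * (if u ∈ U then (1:ℝ) else 0))
          - c * (A u v * (if v ∈ U then (1:ℝ) else 0))
          + c * c * A u v) := by
      simp only [dotProduct, Matrix.mulVec, dotProduct, Finset.mul_sum]
      refine Finset.sum_congr rfl fun u _ => Finset.sum_congr rfl fun v _ => ?_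
      simp only [hx]
      ring
    rw [expand]
    simp only [Finset.sum_add_distrib, Finset.sum_sub_distrib, ← Finset.mul_sum]
    rw [h1, h2, h3, h4]
  have hxx : x ⬝ᵥ x = (U.card : ℝ) - 2 * c * U.card + c * c * n := by
    have expand : x ⬝ᵥ x = ∑ v, ((if v ∈ U then (1:ℝ) else 0)
        - 2 * c * (if v ∈ U then (1:ℝ) else 0) + c * c) := by
      simp only [dotProduct]
      refine Finset.sum_congr rfl fun v _ => ?_
      simp only [hx]
      split <;> ring
    rw [expand]
    simp only [Finset.sum_add_distrib, Finset.sum_sub_distrib, ← Finset.mul_sum,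
      Finset.sum_ite_mem, Finset.univ_inter, Finset.sum_const, Finset.card_univ, ← hn]
    push_cast
    ring
  have hMx : x ⬝ᵥ (M *ᵥ x) = x ⬝ᵥ (A *ᵥ x) - lmin * (x ⬝ᵥ x) := by
    simp [hM, Matrix.sub_mulVec, Matrix.smul_mulVec, Matrix.one_mulVec,
      dotProduct_sub, dotProduct_smul, smul_eq_mul]
  rw [hMx, hAx, hxx] at key
  -- now pure algebra
  have hnpos : (0:ℝ) < n := by exact_mod_cast hpos
  have hcn : c * n = U.card := by
    rw [hc]; field_simp
  rw [div_mul_eq_mul_div, div_le_div_iff₀ (by positivity) (by norm_num)]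
  have h := mul_nonneg key hnpos.le
  have hid : (S - c * ((d:ℝ) * U.card) - c * ((d:ℝ) * U.card) + c * c * ((d:ℝ) * n)
      - lmin * ((U.card:ℝ) - 2 * c * U.card + c * c * n)) * n
      = S * n - (d:ℝ) * ((U.card:ℝ) * U.card) - lmin * ((U.card:ℝ) * ((n:ℝ) - U.card)) := by
    linear_combination (-2*(d:ℝ)*U.card + (d:ℝ)*(c*n + U.card) + 2*lmin*U.card
      - lmin*(c*n + U.card)) * hcn
  rw [hid] at h
  nlinarith [h]
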